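/- Proposition (quadratic remainder for the expected entry-game score, continuous covariates). Suppose: (i) for all x ∈ 𝒳, η_j(θ;x) ≥ c and η₁(θ;x) − η_j(θ;x) ≥ c for j = 2,3, η_j(θ;x) ≤ 1, and ‖∇_θη_j(θ;x)‖ ≤ C; (ii) p₀(y|x) ≥ c for all (y,x); (iii) for j = 1,2, the conditional probability density function of Z_j(X; p₀) given the discrete subvector X_d of X is uniformly bounded on its support (the unconditional density if there are no discrete covariates). Then there exists a constant c' < ∞ such that for every δ > 0 and every conditional pmf p with sup_{y,x}|p(y|x) − p₀(y|x)| ≤ δ: ‖ E[ m_θ(X; p) ] − E[ m_θ(X; p₀) ] ‖ ≤ c' δ². Consequently, the pathwise derivative of p ↦ E[m_θ(X;p)] at p₀ exists, equals zero in every direction, and the quadratic-remainder expansion of Assumption 2 holds for the entry game. -/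

import Mathlib

open scoped BigOperators
open Classical

noncomputable section

/-- Outcomes of the two-player entry game. -/
inductive EntryOutcome : Type
  | y00 | y01 | y10 | y11
deriving DecidableEq

instance : Fintype EntryOutcome :=
  ⟨{.y00, .y01, .y10, .y11}, by intro x; cases x <;> simp⟩

namespace EntryGame

variable {𝒳 : Type*} {d : ℕ}

/-- `Z₁(x;p) = p((1,0)|x) η₁(x) − (p((1,0)|x)+p((0,1)|x)) η₂(x)`. -/
def Z1 (η₁ η₂ : 𝒳 → ℝ) (p : 𝒳 → EntryOutcome → ℝ) (x : 𝒳) : ℝ :=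
  p x .y10 * η₁ x - (p x .y10 + p x .y01) * η₂ x

/-- `Z₂(x;p) = p((1,0)|x) η₁(x) − (p((1,0)|x)+p((0,1)|x)) η₃(x)`. -/
def Z2 (η₁ η₃ : 𝒳 → ℝ) (p : 𝒳 → EntryOutcome → ℝ) (x : 𝒳) : ℝ :=
  p x .y10 * η₁ x - (p x .y10 + p x .y01) * η₃ x

/-- Regime indicator `I₁ = 1{Z₁ ≤ 0}·1{Z₂ ≥ 0}`. -/
def I1 (η₁ η₂ η₃ : 𝒳 → ℝ) (p : 𝒳 → EntryOutcome → ℝ) (x : 𝒳) : ℝ :=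
  if Z1 η₁ η₂ p x ≤ 0 ∧ 0 ≤ Z2 η₁ η₃ p x then 1 else 0

/-- Regime indicator `I₂ = 1{Z₁ > 0}`. -/
def I2 (η₁ η₂ : 𝒳 → ℝ) (p : 𝒳 → EntryOutcome → ℝ) (x : 𝒳) : ℝ :=
  if 0 < Z1 η₁ η₂ p x then 1 else 0

/-- Regime indicator `I₃ = 1{Z₂ < 0}`. -/
def I3 (η₁ η₃ : 𝒳 → ℝ) (p : 𝒳 → EntryOutcome → ℝ) (x : 𝒳) : ℝ :=
  if Z2 η₁ η₃ p x < 0 then 1 else 0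

/-- The entry-game score `s_θ(y|x;p)`; `g j = ∇_θ η_j`, and the scores of the outcomes
`(0,0)` and `(1,1)` (which do not depend on `p`) are the given `s00`, `s11`. -/
def score (η₁ η₂ η₃ : 𝒳 → ℝ) (g₁ g₂ g₃ s00 s11 : 𝒳 → Fin d → ℝ)
    (p : 𝒳 → EntryOutcome → ℝ) (x : 𝒳) : EntryOutcome → Fin d → ℝ
  | .y00 => s00 x
  | .y11 => s11 x
  | .y10 =>
      (I1 η₁ η₂ η₃ p x / η₁ x) • g₁ x + (I2 η₁ η₂ p x / η₂ x) • g₂ x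
        + (I3 η₁ η₃ p x / η₃ x) • g₃ x
  | .y01 =>
      (I1 η₁ η₂ η₃ p x / η₁ x) • g₁ x
        + (I2 η₁ η₂ p x / (η₁ x - η₂ x)) • (g₁ x - g₂ x)
        + (I3 η₁ η₃ p x / (η₁ x - η₃ x)) • (g₁ x - g₃ x)

/-- The score discrepancy `Δ(x; p, p₀) = ‖Σ_y p₀(y|x)(s_θ(y|x;p) − s_θ(y|x;p₀))‖`. -/
def Δ (η₁ η₂ η₃ : 𝒳 → ℝ) (g₁ g₂ g₃ s00 s11 : 𝒳 → Fin d → ℝ)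
    (p p₀ : 𝒳 → EntryOutcome → ℝ) (x : 𝒳) : ℝ :=
  ‖∑ y : EntryOutcome, p₀ x y •
      (score η₁ η₂ η₃ g₁ g₂ g₃ s00 s11 p x y - score η₁ η₂ η₃ g₁ g₂ g₃ s00 s11 p₀ x y)‖

end EntryGame

open EntryGame Filter MeasureTheory
open scoped Topology

section AuxLemmas

open EntryGame

variable {𝒳 : Type*} {d : ℕ}

lemma EntryOutcome.sum_eq {M : Type*} [AddCommMonoid M] (f : EntryOutcome → M) :
    ∑ y : EntryOutcome, f y = f .y00 + f .y01 + f .y10 + f .y11 := by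
  show Finset.sum _ f = _
  rw [show (Finset.univ : Finset EntryOutcome) = {.y00, .y01, .y10, .y11} from rfl]
  rw [Finset.sum_insert (by decide), Finset.sum_insert (by decide),
    Finset.sum_insert (by decide), Finset.sum_singleton]
  abel

lemma EntryGame.I1_eq' (η₁ η₂ η₃ : 𝒳 → ℝ) (p : 𝒳 → EntryOutcome → ℝ) (x : 𝒳)
    (h32 : η₃ x ≤ η₂ x) (h10 : 0 ≤ p x .y10) (h01 : 0 ≤ p x .y01) :
    I1 η₁ η₂ η₃ p x = 1 - I2 η₁ η₂ p x - I3 η₁ η₃ p x := by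
  have hZ : Z1 η₁ η₂ p x ≤ Z2 η₁ η₃ p x := by
    have := mul_nonneg (add_nonneg h10 h01) (sub_nonneg.2 h32)
    unfold Z1 Z2; nlinarith
  unfold I1 I2 I3
  rcases lt_or_ge 0 (Z1 η₁ η₂ p x) with h1 | h1
  · rw [if_neg (fun h => absurd h.1 (not_le.2 h1)), if_pos h1,
      if_neg (not_lt.2 (le_trans h1.le hZ))]; ring
  · rw [if_neg (not_lt.2 h1)]
    rcases lt_or_ge (Z2 η₁ η₃ p x) 0 with h2 | h2
    · rw [if_neg (fun h => absurd h.2 (not_le.2 h2)), if_pos h2]; ring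
    · rw [if_pos ⟨h1, h2⟩, if_neg (not_lt.2 h2)]; ring

lemma EntryGame.key_identity (η₁ η₂ η₃ : 𝒳 → ℝ) (g₁ g₂ g₃ s00 s11 : 𝒳 → Fin d → ℝ)
    (p p₀ : 𝒳 → EntryOutcome → ℝ) (x : 𝒳)
    (h32 : η₃ x ≤ η₂ x)
    (he1 : η₁ x ≠ 0) (he2 : η₂ x ≠ 0) (he3 : η₃ x ≠ 0)
    (he12 : η₁ x - η₂ x ≠ 0) (he13 : η₁ x - η₃ x ≠ 0)
    (hp10 : 0 ≤ p x .y10) (hp01 : 0 ≤ p x .y01)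
    (hq10 : 0 ≤ p₀ x .y10) (hq01 : 0 ≤ p₀ x .y01) :
    ∑ y : EntryOutcome, p₀ x y • (score η₁ η₂ η₃ g₁ g₂ g₃ s00 s11 p x y
        - score η₁ η₂ η₃ g₁ g₂ g₃ s00 s11 p₀ x y)
    = (I2 η₁ η₂ p x - I2 η₁ η₂ p₀ x) •
        (Z1 η₁ η₂ p₀ x • ((η₂ x * (η₁ x - η₂ x))⁻¹ • g₂ x - (η₁ x * (η₁ x - η₂ x))⁻¹ • g₁ x))
      + (I3 η₁ η₃ p x - I3 η₁ η₃ p₀ x) •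
        (Z2 η₁ η₃ p₀ x • ((η₃ x * (η₁ x - η₃ x))⁻¹ • g₃ x - (η₁ x * (η₁ x - η₃ x))⁻¹ • g₁ x)) := by
  rw [EntryOutcome.sum_eq]
  have h1 := I1_eq' η₁ η₂ η₃ p x h32 hp10 hp01
  have h2 := I1_eq' η₁ η₂ η₃ p₀ x h32 hq10 hq01
  funext i
  simp only [score, h1, h2, Z1, Z2, Pi.add_apply, Pi.smul_apply, Pi.sub_apply, smul_eq_mul,
    sub_self, smul_zero, zero_add, add_zero, Pi.zero_apply]
  field_simp
  ring

lemma flip_pos_aux {zp zq δ : ℝ} (h : |zp - zq| ≤ δ) (hne : ¬ ((0 < zp) ↔ (0 < zq))) :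
    |zq| ≤ δ := by
  have hd := abs_le.1 h
  rcases lt_or_ge 0 zp with h1 | h1
  · have h2 : zq ≤ 0 := by
      by_contra h2; push_neg at h2; exact hne ⟨fun _ => h2, fun _ => h1⟩
    rw [abs_of_nonpos h2]; linarith
  · have h2 : 0 < zq := by
      by_contra h2; push_neg at h2
      exact hne (iff_of_false (not_lt.2 h1) (not_lt.2 h2))
    rw [abs_of_pos h2]; linarith

lemma flip_neg_aux {zp zq δ : ℝ} (h : |zp - zq| ≤ δ) (hne : ¬ ((zp < 0) ↔ (zq < 0))) :
    |zq| ≤ δ := by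
  have hd := abs_le.1 h
  rcases lt_or_ge zp 0 with h1 | h1
  · have h2 : 0 ≤ zq := by
      by_contra h2; push_neg at h2; exact hne ⟨fun _ => h2, fun _ => h1⟩
    rw [abs_of_nonneg h2]; linarith
  · have h2 : zq < 0 := by
      by_contra h2; push_neg at h2
      exact hne (iff_of_false (not_lt.2 h1) (not_lt.2 h2))
    rw [abs_of_neg h2]; linarith

lemma EntryGame.Z1_dist (η₁ η₂ : 𝒳 → ℝ) (p p₀ : 𝒳 → EntryOutcome → ℝ) (x : 𝒳) (δ : ℝ)
    (h2 : 0 ≤ η₂ x) (h12 : 0 ≤ η₁ x - η₂ x) (h1 : η₁ x ≤ 1)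
    (hd10 : |p x .y10 - p₀ x .y10| ≤ δ) (hd01 : |p x .y01 - p₀ x .y01| ≤ δ) :
    |Z1 η₁ η₂ p x - Z1 η₁ η₂ p₀ x| ≤ δ := by
  have hδ : 0 ≤ δ := le_trans (abs_nonneg _) hd10
  have heq : Z1 η₁ η₂ p x - Z1 η₁ η₂ p₀ x
      = (p x .y10 - p₀ x .y10) * (η₁ x - η₂ x) - (p x .y01 - p₀ x .y01) * η₂ x := by
    unfold Z1; ring
  have h3 : |(p x .y10 - p₀ x .y10) * (η₁ x - η₂ x)| ≤ δ * (η₁ x - η₂ x) := by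
    rw [abs_mul, abs_of_nonneg h12]; exact mul_le_mul_of_nonneg_right hd10 h12
  have h4 : |(p x .y01 - p₀ x .y01) * η₂ x| ≤ δ * η₂ x := by
    rw [abs_mul, abs_of_nonneg h2]; exact mul_le_mul_of_nonneg_right hd01 h2
  rw [heq]
  calc |(p x .y10 - p₀ x .y10) * (η₁ x - η₂ x) - (p x .y01 - p₀ x .y01) * η₂ x|
      ≤ |(p x .y10 - p₀ x .y10) * (η₁ x - η₂ x)| + |(p x .y01 - p₀ x .y01) * η₂ x| :=
        abs_sub _ _
    _ ≤ δ * (η₁ x - η₂ x) + δ * η₂ x := add_le_add h3 h4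
    _ = δ * η₁ x := by ring
    _ ≤ δ := by nlinarith

lemma term_bound_aux {d : ℕ} (c C' δ J Z a b : ℝ) (u v : Fin d → ℝ)
    (hc : 0 < c) (hJ : |J| ≤ 1) (hZ : |Z| ≤ δ)
    (ha : c ^ 2 ≤ a) (hb : c ^ 2 ≤ b)
    (hu : ‖u‖ ≤ C') (hv : ‖v‖ ≤ C') :
    ‖J • (Z • (a⁻¹ • u - b⁻¹ • v))‖ ≤ 2 * C' / c ^ 2 * δ := by
  have hc2 : (0:ℝ) < c ^ 2 := by positivity
  have hC' : 0 ≤ C' := le_trans (norm_nonneg u) hu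
  have hδ : 0 ≤ δ := le_trans (abs_nonneg _) hZ
  have key : ∀ (e : ℝ) (w : Fin d → ℝ), c ^ 2 ≤ e → ‖w‖ ≤ C' → ‖e⁻¹ • w‖ ≤ (c ^ 2)⁻¹ * C' := by
    intro e w he hw
    rw [norm_smul, Real.norm_eq_abs, abs_of_nonneg (inv_nonneg.2 (le_trans hc2.le he))]
    exact mul_le_mul (inv_anti₀ hc2 he) hw (norm_nonneg w) (inv_nonneg.2 hc2.le)
  have hw : ‖a⁻¹ • u - b⁻¹ • v‖ ≤ 2 * C' / c ^ 2 := by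
    calc ‖a⁻¹ • u - b⁻¹ • v‖ ≤ ‖a⁻¹ • u‖ + ‖b⁻¹ • v‖ := norm_sub_le _ _
      _ ≤ (c ^ 2)⁻¹ * C' + (c ^ 2)⁻¹ * C' := add_le_add (key a u ha hu) (key b v hb hv)
      _ = 2 * C' / c ^ 2 := by ring
  rw [norm_smul, norm_smul, Real.norm_eq_abs, Real.norm_eq_abs]
  calc |J| * (|Z| * ‖a⁻¹ • u - b⁻¹ • v‖)
      ≤ 1 * (δ * (2 * C' / c ^ 2)) := by
        refine mul_le_mul hJ ?_ (by positivity) zero_le_one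
        exact mul_le_mul hZ hw (norm_nonneg _) hδ
    _ = 2 * C' / c ^ 2 * δ := by ring

end AuxLemmas


/-- Expected score `E[m_θ(X;p)] = ∫ Σ_y p₀(y|x) s_θ(y|x;p) dμ(x)`, where `μ` is the
distribution of the covariates. -/
noncomputable def expectedScoreInt {𝒳 : Type*} [MeasurableSpace 𝒳] {d : ℕ}
    (η₁ η₂ η₃ : 𝒳 → ℝ) (g₁ g₂ g₃ s00 s11 : 𝒳 → Fin d → ℝ)
    (μ : Measure 𝒳) (p₀ p : 𝒳 → EntryOutcome → ℝ) : Fin d → ℝ :=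
  ∫ x, (∑ y : EntryOutcome, p₀ x y •
      EntryGame.score η₁ η₂ η₃ g₁ g₂ g₃ s00 s11 p x y) ∂μ

/-- **Quadratic remainder for the expected entry-game score (continuous covariates).**
Under boundedness of the model probabilities and their gradients, a lower bound `c` on the
true conditional pmf, and a uniformly bounded conditional density of the regime-switching
quantities `Z_j(X;p₀)` given the discrete covariate subvector `Xd`, the expected score moves
only by `O(δ²)` when the conditional pmf is perturbed by `δ` in the sup norm; hence the
pathwise derivative of `p ↦ E[m_θ(X;p)]` at `p₀` exists and is zero in every direction
(so the quadratic-remainder expansion of Assumption 2 holds with zero derivative). -/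
theorem entry_game_expected_score_quadratic_remainder
    {𝒳 : Type*} [MeasurableSpace 𝒳] {𝒳d : Type*} [Fintype 𝒳d] {d : ℕ}
    (μ : Measure 𝒳) [IsProbabilityMeasure μ]
    (Xd : 𝒳 → 𝒳d)
    (η₁ η₂ η₃ : 𝒳 → ℝ) (g₁ g₂ g₃ s00 s11 : 𝒳 → Fin d → ℝ)
    (hmη : Measurable η₁ ∧ Measurable η₂ ∧ Measurable η₃)
    (hmg : Measurable g₁ ∧ Measurable g₂ ∧ Measurable g₃ ∧
      Measurable s00 ∧ Measurable s11)
    (c C : ℝ) (hc : 0 < c)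
    -- (i) bounds on the model probabilities and their gradients
    (hη₂ : ∀ x, c ≤ η₂ x) (hη₃ : ∀ x, c ≤ η₃ x)
    (hη₁₂ : ∀ x, c ≤ η₁ x - η₂ x) (hη₁₃ : ∀ x, c ≤ η₁ x - η₃ x)
    (hη₃₂ : ∀ x, η₃ x ≤ η₂ x)
    (hηle : ∀ x, η₁ x ≤ 1 ∧ η₂ x ≤ 1 ∧ η₃ x ≤ 1)
    (hg : ∀ x, ‖g₁ x‖ ≤ C ∧ ‖g₂ x‖ ≤ C ∧ ‖g₃ x‖ ≤ C)
    -- (ii) the true conditional pmf is bounded below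
    (p₀ : 𝒳 → EntryOutcome → ℝ)
    (hmp₀ : ∀ y, Measurable fun x => p₀ x y)
    (hp₀ : ∀ x, (∀ y, 0 ≤ p₀ x y) ∧ ∑ y, p₀ x y = 1)
    (hp₀c : ∀ x y, c ≤ p₀ x y)
    -- (iii) uniformly bounded conditional density of `Z_j(X;p₀)` given `Xd`
    (Cf : ℝ)
    (hpdf1 : ∀ xd : 𝒳d, ∀ a b : ℝ, a ≤ b →
      μ {x | Xd x = xd ∧ Z1 η₁ η₂ p₀ x ∈ Set.Icc a b} ≤ ENNReal.ofReal (Cf * (b - a)))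
    (hpdf2 : ∀ xd : 𝒳d, ∀ a b : ℝ, a ≤ b →
      μ {x | Xd x = xd ∧ Z2 η₁ η₃ p₀ x ∈ Set.Icc a b} ≤ ENNReal.ofReal (Cf * (b - a))) :
    (∃ c' : ℝ, 0 ≤ c' ∧
      ∀ δ > (0 : ℝ), ∀ p : 𝒳 → EntryOutcome → ℝ,
        (∀ y, Measurable fun x => p x y) →
        (∀ x, (∀ y, 0 ≤ p x y) ∧ ∑ y, p x y = 1) →
        (∀ x y, |p x y - p₀ x y| ≤ δ) →
        ‖expectedScoreInt η₁ η₂ η₃ g₁ g₂ g₃ s00 s11 μ p₀ p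
            - expectedScoreInt η₁ η₂ η₃ g₁ g₂ g₃ s00 s11 μ p₀ p₀‖ ≤ c' * δ ^ 2) ∧
    (∀ p : 𝒳 → EntryOutcome → ℝ,
      (∀ y, Measurable fun x => p x y) →
      (∀ x, (∀ y, 0 ≤ p x y) ∧ ∑ y, p x y = 1) →
      Tendsto (fun τ : ℝ => τ⁻¹ •
          (expectedScoreInt η₁ η₂ η₃ g₁ g₂ g₃ s00 s11 μ p₀
              (fun x y => p₀ x y + τ * (p x y - p₀ x y))
            - expectedScoreInt η₁ η₂ η₃ g₁ g₂ g₃ s00 s11 μ p₀ p₀))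
        (𝓝[≠] (0 : ℝ)) (𝓝 0)) := by
    classical
  obtain ⟨hmη₁, hmη₂, hmη₃⟩ := hmη
  obtain ⟨hmg₁, hmg₂, hmg₃, hms00, hms11⟩ := hmg
  have hc2 : (0:ℝ) < c ^ 2 := by positivity
  have hC0 : (0:ℝ) ≤ max C 0 := le_max_right _ _
  have he1pos : ∀ x, 0 < η₁ x := fun x => by have := hη₂ x; have := hη₁₂ x; linarith
  have he2pos : ∀ x, 0 < η₂ x := fun x => lt_of_lt_of_le hc (hη₂ x)
  have he3pos : ∀ x, 0 < η₃ x := fun x => lt_of_lt_of_le hc (hη₃ x)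
  have he12pos : ∀ x, 0 < η₁ x - η₂ x := fun x => lt_of_lt_of_le hc (hη₁₂ x)
  have he13pos : ∀ x, 0 < η₁ x - η₃ x := fun x => lt_of_lt_of_le hc (hη₁₃ x)
  have hg' : ∀ x, ‖g₁ x‖ ≤ max C 0 ∧ ‖g₂ x‖ ≤ max C 0 ∧ ‖g₃ x‖ ≤ max C 0 := fun x =>
    ⟨le_trans (hg x).1 (le_max_left _ _), le_trans (hg x).2.1 (le_max_left _ _),
      le_trans (hg x).2.2 (le_max_left _ _)⟩
  have hmZ1q : Measurable (Z1 η₁ η₂ p₀) :=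
    ((hmp₀ .y10).mul hmη₁).sub (((hmp₀ .y10).add (hmp₀ .y01)).mul hmη₂)
  have hmZ2q : Measurable (Z2 η₁ η₃ p₀) :=
    ((hmp₀ .y10).mul hmη₁).sub (((hmp₀ .y10).add (hmp₀ .y01)).mul hmη₃)
  have hmI2q : Measurable (I2 η₁ η₂ p₀) :=
    Measurable.ite (measurableSet_lt measurable_const hmZ1q) measurable_const measurable_const
  have hmI3q : Measurable (I3 η₁ η₃ p₀) :=
    Measurable.ite (measurableSet_lt hmZ2q measurable_const) measurable_const measurable_const
  have hle1 : ∀ (q : 𝒳 → EntryOutcome → ℝ), (∀ x, (∀ y, 0 ≤ q x y) ∧ ∑ y, q x y = 1) →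
      ∀ x y, q x y ≤ 1 := by
    intro q hq x y
    have h := (hq x).2
    have h2 := Finset.single_le_sum (f := fun y => q x y) (fun y _ => (hq x).1 y)
      (Finset.mem_univ y)
    linarith
  have hI2abs : ∀ (q q' : 𝒳 → EntryOutcome → ℝ) x, |I2 η₁ η₂ q x - I2 η₁ η₂ q' x| ≤ 1 := by
    intro q q' x; unfold I2
    split <;> split <;> norm_num
  have hI3abs : ∀ (q q' : 𝒳 → EntryOutcome → ℝ) x, |I3 η₁ η₃ q x - I3 η₁ η₃ q' x| ≤ 1 := by
    intro q q' x; unfold I3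
    split <;> split <;> norm_num
  have hmain : ∀ δ > (0:ℝ), ∀ p : 𝒳 → EntryOutcome → ℝ,
      (∀ y, Measurable fun x => p x y) →
      (∀ x, (∀ y, 0 ≤ p x y) ∧ ∑ y, p x y = 1) →
      (∀ x y, |p x y - p₀ x y| ≤ δ) →
      ‖expectedScoreInt η₁ η₂ η₃ g₁ g₂ g₃ s00 s11 μ p₀ p
          - expectedScoreInt η₁ η₂ η₃ g₁ g₂ g₃ s00 s11 μ p₀ p₀‖
        ≤ (2 * max C 0 / c ^ 2 * (4 * (Fintype.card 𝒳d) * max Cf 0)) * δ ^ 2 := by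
    intro δ hδ p hmp hp hclose
    have hmZ1p : Measurable (Z1 η₁ η₂ p) :=
      ((hmp .y10).mul hmη₁).sub (((hmp .y10).add (hmp .y01)).mul hmη₂)
    have hmZ2p : Measurable (Z2 η₁ η₃ p) :=
      ((hmp .y10).mul hmη₁).sub (((hmp .y10).add (hmp .y01)).mul hmη₃)
    have hmI2p : Measurable (I2 η₁ η₂ p) :=
      Measurable.ite (measurableSet_lt measurable_const hmZ1p) measurable_const measurable_const
    have hmI3p : Measurable (I3 η₁ η₃ p) :=
      Measurable.ite (measurableSet_lt hmZ2p measurable_const) measurable_const measurable_const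
    set S₁ : Set 𝒳 := {x | |Z1 η₁ η₂ p₀ x| ≤ δ} with hS₁def
    set S₂ : Set 𝒳 := {x | |Z2 η₁ η₃ p₀ x| ≤ δ} with hS₂def
    have hS₁m : MeasurableSet S₁ := measurableSet_le hmZ1q.abs measurable_const
    have hS₂m : MeasurableSet S₂ := measurableSet_le hmZ2q.abs measurable_const
    set v₂ : 𝒳 → Fin d → ℝ := fun x =>
      Z1 η₁ η₂ p₀ x • ((η₂ x * (η₁ x - η₂ x))⁻¹ • g₂ x - (η₁ x * (η₁ x - η₂ x))⁻¹ • g₁ x)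
      with hv₂def
    set v₃ : 𝒳 → Fin d → ℝ := fun x =>
      Z2 η₁ η₃ p₀ x • ((η₃ x * (η₁ x - η₃ x))⁻¹ • g₃ x - (η₁ x * (η₁ x - η₃ x))⁻¹ • g₁ x)
      with hv₃def
    set D : 𝒳 → Fin d → ℝ := fun x =>
      (I2 η₁ η₂ p x - I2 η₁ η₂ p₀ x) • v₂ x + (I3 η₁ η₃ p x - I3 η₁ η₃ p₀ x) • v₃ x with hDdef
    set bound : 𝒳 → ℝ := fun x =>
      2 * max C 0 / c ^ 2 * δ *
        (S₁.indicator (fun _ => (1:ℝ)) x + S₂.indicator (fun _ => (1:ℝ)) x) with hbdef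
    have hkey : ∀ x, (∑ y : EntryOutcome, p₀ x y • (score η₁ η₂ η₃ g₁ g₂ g₃ s00 s11 p x y
        - score η₁ η₂ η₃ g₁ g₂ g₃ s00 s11 p₀ x y)) = D x := by
      intro x
      rw [hDdef, hv₂def, hv₃def]
      exact key_identity η₁ η₂ η₃ g₁ g₂ g₃ s00 s11 p p₀ x (hη₃₂ x)
        (ne_of_gt (he1pos x)) (ne_of_gt (he2pos x)) (ne_of_gt (he3pos x))
        (ne_of_gt (he12pos x)) (ne_of_gt (he13pos x))
        ((hp x).1 .y10) ((hp x).1 .y01) ((hp₀ x).1 .y10) ((hp₀ x).1 .y01)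
    have hflip1 : ∀ x, I2 η₁ η₂ p x ≠ I2 η₁ η₂ p₀ x → x ∈ S₁ := by
      intro x hne
      have hd := Z1_dist η₁ η₂ p p₀ x δ (he2pos x).le (he12pos x).le (hηle x).1
        (hclose x .y10) (hclose x .y01)
      have hiff : ¬ ((0 < Z1 η₁ η₂ p x) ↔ (0 < Z1 η₁ η₂ p₀ x)) := by
        intro hiff
        exact hne (by unfold I2; rw [if_congr hiff rfl rfl])
      exact flip_pos_aux hd hiff
    have hflip2 : ∀ x, I3 η₁ η₃ p x ≠ I3 η₁ η₃ p₀ x → x ∈ S₂ := by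
      intro x hne
      have hd : |Z2 η₁ η₃ p x - Z2 η₁ η₃ p₀ x| ≤ δ :=
        Z1_dist η₁ η₃ p p₀ x δ (he3pos x).le (he13pos x).le (hηle x).1
          (hclose x .y10) (hclose x .y01)
      have hiff : ¬ ((Z2 η₁ η₃ p x < 0) ↔ (Z2 η₁ η₃ p₀ x < 0)) := by
        intro hiff
        exact hne (by unfold I3; rw [if_congr hiff rfl rfl])
      exact flip_neg_aux hd hiff
    have hDle : ∀ x, ‖D x‖ ≤ bound x := by
      intro x
      have hind1 : (0:ℝ) ≤ S₁.indicator (fun _ => (1:ℝ)) x :=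
        Set.indicator_nonneg (fun _ _ => zero_le_one) x
      have hind2 : (0:ℝ) ≤ S₂.indicator (fun _ => (1:ℝ)) x :=
        Set.indicator_nonneg (fun _ _ => zero_le_one) x
      have hb2 : ‖(I2 η₁ η₂ p x - I2 η₁ η₂ p₀ x) • v₂ x‖
          ≤ 2 * max C 0 / c ^ 2 * δ * S₁.indicator (fun _ => (1:ℝ)) x := by
        by_cases hne : I2 η₁ η₂ p x = I2 η₁ η₂ p₀ x
        · rw [hne, sub_self, zero_smul, norm_zero]
          exact mul_nonneg (by positivity) hind1
        · have hmem := hflip1 x hne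
          rw [Set.indicator_of_mem hmem, mul_one, hv₂def]
          exact term_bound_aux c (max C 0) δ _ _ _ _ _ _ hc (hI2abs p p₀ x) hmem
            (by nlinarith [hη₂ x, hη₁₂ x]) (by nlinarith [hη₂ x, hη₁₂ x])
            (hg' x).2.1 (hg' x).1
      have hb3 : ‖(I3 η₁ η₃ p x - I3 η₁ η₃ p₀ x) • v₃ x‖
          ≤ 2 * max C 0 / c ^ 2 * δ * S₂.indicator (fun _ => (1:ℝ)) x := by
        by_cases hne : I3 η₁ η₃ p x = I3 η₁ η₃ p₀ x
        · rw [hne, sub_self, zero_smul, norm_zero]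
          exact mul_nonneg (by positivity) hind2
        · have hmem := hflip2 x hne
          rw [Set.indicator_of_mem hmem, mul_one, hv₃def]
          exact term_bound_aux c (max C 0) δ _ _ _ _ _ _ hc (hI3abs p p₀ x) hmem
            (by nlinarith [hη₃ x, hη₁₃ x]) (by nlinarith [hη₃ x, hη₁₃ x])
            (hg' x).2.2 (hg' x).1
      calc ‖D x‖ ≤ ‖(I2 η₁ η₂ p x - I2 η₁ η₂ p₀ x) • v₂ x‖
            + ‖(I3 η₁ η₃ p x - I3 η₁ η₃ p₀ x) • v₃ x‖ := by
            rw [hDdef]; exact norm_add_le _ _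
        _ ≤ 2 * max C 0 / c ^ 2 * δ * S₁.indicator (fun _ => (1:ℝ)) x
            + 2 * max C 0 / c ^ 2 * δ * S₂.indicator (fun _ => (1:ℝ)) x := add_le_add hb2 hb3
        _ = bound x := by rw [hbdef]; ring
    have hindInt1 : Integrable (S₁.indicator fun _ => (1:ℝ)) μ :=
      (integrable_indicator_iff hS₁m).2 (integrableOn_const (measure_lt_top μ S₁).ne)
    have hindInt2 : Integrable (S₂.indicator fun _ => (1:ℝ)) μ :=
      (integrable_indicator_iff hS₂m).2 (integrableOn_const (measure_lt_top μ S₂).ne)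
    have hboundInt : Integrable bound μ := by
      rw [hbdef]; exact (hindInt1.add hindInt2).const_mul _
    have hmD : Measurable D := by
      rw [hDdef]
      apply measurable_pi_lambda
      intro i
      simp only [Pi.add_apply, Pi.smul_apply, Pi.sub_apply, smul_eq_mul]
      have m1 : Measurable fun x => (I2 η₁ η₂ p x - I2 η₁ η₂ p₀ x) *
          (Z1 η₁ η₂ p₀ x * ((η₂ x * (η₁ x - η₂ x))⁻¹ * g₂ x i
            - (η₁ x * (η₁ x - η₂ x))⁻¹ * g₁ x i)) :=
        (hmI2p.sub hmI2q).mul (hmZ1q.mul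
          ((((hmη₂.mul (hmη₁.sub hmη₂)).inv).mul ((measurable_pi_apply i).comp hmg₂)).sub
            (((hmη₁.mul (hmη₁.sub hmη₂)).inv).mul ((measurable_pi_apply i).comp hmg₁))))
      have m2 : Measurable fun x => (I3 η₁ η₃ p x - I3 η₁ η₃ p₀ x) *
          (Z2 η₁ η₃ p₀ x * ((η₃ x * (η₁ x - η₃ x))⁻¹ * g₃ x i
            - (η₁ x * (η₁ x - η₃ x))⁻¹ * g₁ x i)) :=
        (hmI3p.sub hmI3q).mul (hmZ2q.mul
          ((((hmη₃.mul (hmη₁.sub hmη₃)).inv).mul ((measurable_pi_apply i).comp hmg₃)).sub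
            (((hmη₁.mul (hmη₁.sub hmη₃)).inv).mul ((measurable_pi_apply i).comp hmg₁))))
      exact m1.add m2
    have hDInt : Integrable D μ :=
      Integrable.mono' hboundInt hmD.aestronglyMeasurable (ae_of_all _ hDle)
    have hmeasbd : ∀ (Zf : 𝒳 → ℝ) (S : Set 𝒳), S = {x | |Zf x| ≤ δ} →
        (∀ xd : 𝒳d, ∀ a b : ℝ, a ≤ b →
          μ {x | Xd x = xd ∧ Zf x ∈ Set.Icc a b} ≤ ENNReal.ofReal (Cf * (b - a))) →
        (μ S).toReal ≤ (Fintype.card 𝒳d : ℝ) * (max Cf 0 * (2 * δ)) := by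
      intro Zf S hSdef hpdf
      refine ENNReal.toReal_le_of_le_ofReal (by positivity) ?_
      have hsub : S ⊆ ⋃ xd : 𝒳d, {x | Xd x = xd ∧ Zf x ∈ Set.Icc (-δ) δ} := by
        intro x hx
        rw [hSdef] at hx
        exact Set.mem_iUnion.2 ⟨Xd x, rfl, Set.mem_Icc.2 (abs_le.1 hx)⟩
      calc μ S ≤ ∑' xd : 𝒳d, μ {x | Xd x = xd ∧ Zf x ∈ Set.Icc (-δ) δ} :=
            le_trans (measure_mono hsub) (measure_iUnion_le _)
        _ ≤ ∑' _xd : 𝒳d, ENNReal.ofReal (max Cf 0 * (2 * δ)) := by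
            refine ENNReal.tsum_le_tsum fun xd =>
              le_trans (hpdf xd (-δ) δ (by linarith)) (ENNReal.ofReal_le_ofReal ?_)
            have h2δ : δ - -δ = 2 * δ := by ring
            rw [h2δ]
            exact mul_le_mul_of_nonneg_right (le_max_left _ _) (by linarith)
        _ = (Fintype.card 𝒳d : ENNReal) * ENNReal.ofReal (max Cf 0 * (2 * δ)) := by
            rw [tsum_fintype]; simp [Finset.sum_const, nsmul_eq_mul]
        _ = ENNReal.ofReal ((Fintype.card 𝒳d : ℝ) * (max Cf 0 * (2 * δ))) := by
            rw [ENNReal.ofReal_mul (Nat.cast_nonneg _), ENNReal.ofReal_natCast]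
    have hIS₁ : (μ S₁).toReal ≤ (Fintype.card 𝒳d : ℝ) * (max Cf 0 * (2 * δ)) :=
      hmeasbd (Z1 η₁ η₂ p₀) S₁ hS₁def hpdf1
    have hIS₂ : (μ S₂).toReal ≤ (Fintype.card 𝒳d : ℝ) * (max Cf 0 * (2 * δ)) :=
      hmeasbd (Z2 η₁ η₃ p₀) S₂ hS₂def hpdf2
    have hintInd1 : ∫ x, S₁.indicator (fun _ => (1:ℝ)) x ∂μ = (μ S₁).toReal := by
      rw [integral_indicator_const (1:ℝ) hS₁m]; simp [Measure.real]
    have hintInd2 : ∫ x, S₂.indicator (fun _ => (1:ℝ)) x ∂μ = (μ S₂).toReal := by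
      rw [integral_indicator_const (1:ℝ) hS₂m]; simp [Measure.real]
    have hintBound : ∫ x, bound x ∂μ
        = 2 * max C 0 / c ^ 2 * δ * ((μ S₁).toReal + (μ S₂).toReal) := by
      simp only [hbdef]
      rw [integral_const_mul, integral_add hindInt1 hindInt2, hintInd1, hintInd2]
    have hfd : (fun x => (∑ y : EntryOutcome, p₀ x y • score η₁ η₂ η₃ g₁ g₂ g₃ s00 s11 p x y)
        - (∑ y : EntryOutcome, p₀ x y • score η₁ η₂ η₃ g₁ g₂ g₃ s00 s11 p₀ x y)) = D := by
      funext x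
      rw [← hkey x]
      simp only [smul_sub, Finset.sum_sub_distrib]
    by_cases h₀ : Integrable
        (fun x => ∑ y : EntryOutcome, p₀ x y • score η₁ η₂ η₃ g₁ g₂ g₃ s00 s11 p₀ x y) μ
    · have hfInt : Integrable
          (fun x => ∑ y : EntryOutcome, p₀ x y • score η₁ η₂ η₃ g₁ g₂ g₃ s00 s11 p x y) μ := by
        have heq : (fun x => ∑ y : EntryOutcome, p₀ x y • score η₁ η₂ η₃ g₁ g₂ g₃ s00 s11 p x y)
            = fun x => (∑ y : EntryOutcome, p₀ x y • score η₁ η₂ η₃ g₁ g₂ g₃ s00 s11 p₀ x y)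
              + D x := by
          funext x
          rw [← congrFun hfd x]
          abel
        rw [heq]
        exact h₀.add hDInt
      have hdiff : expectedScoreInt η₁ η₂ η₃ g₁ g₂ g₃ s00 s11 μ p₀ p
          - expectedScoreInt η₁ η₂ η₃ g₁ g₂ g₃ s00 s11 μ p₀ p₀ = ∫ x, D x ∂μ := by
        rw [show expectedScoreInt η₁ η₂ η₃ g₁ g₂ g₃ s00 s11 μ p₀ p
            = ∫ x, (∑ y : EntryOutcome, p₀ x y • score η₁ η₂ η₃ g₁ g₂ g₃ s00 s11 p x y) ∂μ
            from rfl,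
          show expectedScoreInt η₁ η₂ η₃ g₁ g₂ g₃ s00 s11 μ p₀ p₀
            = ∫ x, (∑ y : EntryOutcome, p₀ x y • score η₁ η₂ η₃ g₁ g₂ g₃ s00 s11 p₀ x y) ∂μ
            from rfl,
          ← integral_sub hfInt h₀]
        exact congrArg (fun h => ∫ x, h x ∂μ) hfd
      rw [hdiff]
      calc ‖∫ x, D x ∂μ‖ ≤ ∫ x, ‖D x‖ ∂μ := norm_integral_le_integral_norm _
        _ ≤ ∫ x, bound x ∂μ :=
            integral_mono_of_nonneg (ae_of_all _ fun x => norm_nonneg _) hboundInt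
              (ae_of_all _ hDle)
        _ = 2 * max C 0 / c ^ 2 * δ * ((μ S₁).toReal + (μ S₂).toReal) := hintBound
        _ ≤ 2 * max C 0 / c ^ 2 * δ *
              ((Fintype.card 𝒳d : ℝ) * (max Cf 0 * (2 * δ))
                + (Fintype.card 𝒳d : ℝ) * (max Cf 0 * (2 * δ))) :=
            mul_le_mul_of_nonneg_left (add_le_add hIS₁ hIS₂) (by positivity)
        _ = (2 * max C 0 / c ^ 2 * (4 * (Fintype.card 𝒳d) * max Cf 0)) * δ ^ 2 := by ring
    · have hf' : ¬ Integrable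
          (fun x => ∑ y : EntryOutcome, p₀ x y • score η₁ η₂ η₃ g₁ g₂ g₃ s00 s11 p x y) μ := by
        intro h
        apply h₀
        have heq : (fun x => ∑ y : EntryOutcome, p₀ x y • score η₁ η₂ η₃ g₁ g₂ g₃ s00 s11 p₀ x y)
            = fun x => (∑ y : EntryOutcome, p₀ x y • score η₁ η₂ η₃ g₁ g₂ g₃ s00 s11 p x y)
              - D x := by
          funext x
          rw [← congrFun hfd x]
          abel
        rw [heq]
        exact h.sub hDInt
      rw [show expectedScoreInt η₁ η₂ η₃ g₁ g₂ g₃ s00 s11 μ p₀ p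
          = ∫ x, (∑ y : EntryOutcome, p₀ x y • score η₁ η₂ η₃ g₁ g₂ g₃ s00 s11 p x y) ∂μ
          from rfl,
        show expectedScoreInt η₁ η₂ η₃ g₁ g₂ g₃ s00 s11 μ p₀ p₀
          = ∫ x, (∑ y : EntryOutcome, p₀ x y • score η₁ η₂ η₃ g₁ g₂ g₃ s00 s11 p₀ x y) ∂μ
          from rfl,
        integral_undef hf', integral_undef h₀, sub_zero, norm_zero]
      positivity
  refine ⟨⟨2 * max C 0 / c ^ 2 * (4 * (Fintype.card 𝒳d) * max Cf 0), by positivity, hmain⟩, ?_⟩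
  intro p hmp hp
  have hbd : ∀ x y, |p x y - p₀ x y| ≤ 1 := by
    intro x y
    have h1 := hle1 p hp x y
    have h2 := hle1 p₀ hp₀ x y
    have h3 := (hp x).1 y
    have h4 := (hp₀ x).1 y
    rw [abs_le]; constructor <;> linarith
  apply squeeze_zero_norm'
    (a := fun τ : ℝ => 2 * max C 0 / c ^ 2 * (4 * (Fintype.card 𝒳d) * max Cf 0) * |τ|)
  · have hev : ∀ᶠ τ : ℝ in 𝓝[≠] (0:ℝ), |τ| < c := by
      apply eventually_nhdsWithin_of_eventually_nhds
      have habs : Tendsto (fun τ : ℝ => |τ|) (𝓝 0) (𝓝 0) := by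
        simpa using continuous_abs.tendsto (0:ℝ)
      exact habs.eventually_lt_const hc
    filter_upwards [hev, self_mem_nhdsWithin] with τ hτc hτ0
    have hτ : τ ≠ 0 := hτ0
    have habs : 0 < |τ| := abs_pos.2 hτ
    have hclose : ∀ x y, |p₀ x y + τ * (p x y - p₀ x y) - p₀ x y| ≤ |τ| := by
      intro x y
      rw [add_sub_cancel_left, abs_mul]
      calc |τ| * |p x y - p₀ x y| ≤ |τ| * 1 :=
            mul_le_mul_of_nonneg_left (hbd x y) (abs_nonneg τ)
        _ = |τ| := mul_one _
    have hb := hmain |τ| habs (fun x y => p₀ x y + τ * (p x y - p₀ x y))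
      (fun y => (hmp₀ y).add (((hmp y).sub (hmp₀ y)).const_mul τ))
      (fun x => by
        constructor
        · intro y
          have h1 := hclose x y
          have h2 := hp₀c x y
          have h3 := abs_le.1 h1
          show (0:ℝ) ≤ p₀ x y + τ * (p x y - p₀ x y)
          linarith [h3.1, hτc.le]
        · rw [Finset.sum_add_distrib, (hp₀ x).2, ← Finset.mul_sum,
            Finset.sum_sub_distrib, (hp x).2, (hp₀ x).2]
          ring)
      hclose
    rw [norm_smul, Real.norm_eq_abs, abs_inv]
    calc |τ|⁻¹ * ‖expectedScoreInt η₁ η₂ η₃ g₁ g₂ g₃ s00 s11 μ p₀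
            (fun x y => p₀ x y + τ * (p x y - p₀ x y))
          - expectedScoreInt η₁ η₂ η₃ g₁ g₂ g₃ s00 s11 μ p₀ p₀‖
        ≤ |τ|⁻¹ * (2 * max C 0 / c ^ 2 * (4 * (Fintype.card 𝒳d) * max Cf 0) * |τ| ^ 2) :=
          mul_le_mul_of_nonneg_left hb (inv_nonneg.2 (abs_nonneg τ))
      _ = 2 * max C 0 / c ^ 2 * (4 * (Fintype.card 𝒳d) * max Cf 0) * |τ| := by
          rw [show |τ|⁻¹ * (2 * max C 0 / c ^ 2 * (4 * (Fintype.card 𝒳d) * max Cf 0) * |τ| ^ 2)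
              = 2 * max C 0 / c ^ 2 * (4 * (Fintype.card 𝒳d) * max Cf 0) * (|τ|⁻¹ * |τ| * |τ|)
            from by ring, inv_mul_cancel₀ habs.ne', one_mul]
  · have h : Tendsto (fun τ : ℝ => 2 * max C 0 / c ^ 2 * (4 * (Fintype.card 𝒳d) * max Cf 0) * |τ|)
        (𝓝 0) (𝓝 (2 * max C 0 / c ^ 2 * (4 * (Fintype.card 𝒳d) * max Cf 0) * |(0:ℝ)|)) :=
      (continuous_const.mul continuous_abs).tendsto (0:ℝ)
    simpa using h.mono_left nhdsWithin_le_nhds
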